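/- Let H be a commutative Hopf algebra, C a cocommutative coalgebra with a coflat H-coaction δ. For counitary convolution-invertible f, g : C → H^{⊗(q−1)}, the schism differential D satisfies D(f ⋆ g) = D(f) ⋆ D(g). In particular, the part involving the coaction satisfies ((f ⋆ g) ⊗ id) ∘ δ = ((f ⊗ id) ∘ δ) ⋆ ((g ⊗ id) ∘ δ). -/

import Mathlib

open TensorProduct LinearMap Coalgebra

/-- A coflat Hopf coaction of a Hopf algebra `H` on a coalgebra `C`. -/
structure IsCoflatCoaction (R C H : Type) [CommRing R]
    [AddCommGroup C] [Module R C] [Coalgebra R C]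
    [Ring H] [HopfAlgebra R H]
    (δ : C →ₗ[R] C ⊗[R] H) : Prop where
  coassoc : (TensorProduct.assoc R C H H).toLinearMap ∘ₗ
      (TensorProduct.map δ (LinearMap.id : H →ₗ[R] H)) ∘ₗ δ
      = (TensorProduct.map (LinearMap.id : C →ₗ[R] C) (Coalgebra.comul (R := R))) ∘ₗ δ
  counitary : (TensorProduct.rid R C).toLinearMap ∘ₗ
      (TensorProduct.map (LinearMap.id : C →ₗ[R] C) (Coalgebra.counit (R := R))) ∘ₗ δ
      = LinearMap.id
  coflat_mul : (TensorProduct.map (LinearMap.id : (C ⊗[R] C) →ₗ[R] C ⊗[R] C)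
        (LinearMap.mul' R H)) ∘ₗ
      (TensorProduct.tensorTensorTensorComm R C H C H).toLinearMap ∘ₗ
      (TensorProduct.map δ δ) ∘ₗ Coalgebra.comul
      = (TensorProduct.map (Coalgebra.comul (R := R)) (LinearMap.id : H →ₗ[R] H)) ∘ₗ δ
  coflat_counit : (LinearMap.mul' R R) ∘ₗ
      (TensorProduct.map (Coalgebra.counit (R := R)) (Coalgebra.counit (R := R))) ∘ₗ δ
      = Coalgebra.counit

section Conv

variable (R C A : Type) [CommRing R] [AddCommGroup C] [Module R C] [Coalgebra R C]
  [Ring A] [Algebra R A]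

/-- The convolution product on `Hom(C,A)`: `(f ⋆ g)(c) = f(c₍₁₎) g(c₍₂₎)`. -/
noncomputable def conv (f g : C →ₗ[R] A) : C →ₗ[R] A :=
  (LinearMap.mul' R A) ∘ₗ (TensorProduct.map f g) ∘ₗ Coalgebra.comul

/-- The convolution unit `c ↦ ε(c) 1`. -/
noncomputable def convOne : C →ₗ[R] A :=
  (Algebra.linearMap R A) ∘ₗ Coalgebra.counit

/-- Convolution product of a list of maps. -/
noncomputable def convList (l : List (C →ₗ[R] A)) : C →ₗ[R] A :=
  l.foldr (conv R C A) (convOne R C A)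

end Conv

section Tpow

variable (R H : Type) [CommRing R] [CommRing H] [HopfAlgebra R H]

/-- Tensor powers `H^{⊗ q}` of `H` (with `H^{⊗0} = R`), bundled with their
commutative-ring and `R`-algebra structures. -/
noncomputable def TpowAux : ℕ → Σ (A : Type), Σ (_ : CommRing A), Algebra R A
  | 0 => ⟨R, inferInstance, inferInstance⟩
  | 1 => ⟨H, inferInstance, inferInstance⟩
  | n+2 =>
    let p := TpowAux (n+1)
    letI := p.2.1
    letI := p.2.2
    ⟨TensorProduct R p.1 H, inferInstance, inferInstance⟩

/-- The tensor power `H^{⊗ q}`. -/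
noncomputable abbrev Tpow (q : ℕ) : Type := (TpowAux R H q).1

noncomputable instance (q : ℕ) : CommRing (Tpow R H q) := (TpowAux R H q).2.1
noncomputable instance (q : ℕ) : Algebra R (Tpow R H q) := (TpowAux R H q).2.2

/-- `Δ_H^i : H^{⊗q} → H^{⊗(q+1)}`, applying `Δ_H` in the `i`-th tensor slot
(`1 ≤ i ≤ q`; junk value for `q = 0`). -/
noncomputable def deltaSlot : (q : ℕ) → ℕ → (Tpow R H q →ₗ[R] Tpow R H (q+1))
  | 0, _ => 0
  | 1, _ => (Coalgebra.comul (R := R) (A := H) :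
      Tpow R H 1 →ₗ[R] Tpow R H 2)
  | q+2, i =>
    if i = q + 2 then
      ((TensorProduct.assoc R (Tpow R H (q+1)) H H).symm.toLinearMap ∘ₗ
        TensorProduct.map (LinearMap.id : Tpow R H (q+1) →ₗ[R] Tpow R H (q+1))
          (Coalgebra.comul (R := R) (A := H)) :
        Tpow R H (q+2) →ₗ[R] Tpow R H (q+3))
    else
      (TensorProduct.map (deltaSlot (q+1) i) (LinearMap.id : H →ₗ[R] H) :
        Tpow R H (q+2) →ₗ[R] Tpow R H (q+3))

/-- `f ↦ f ⊗ 1 : H^{⊗q} → H^{⊗(q+1)}`. -/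
noncomputable def tensorOne : (q : ℕ) → Tpow R H q →ₗ[R] Tpow R H (q+1)
  | 0 => (Algebra.linearMap R H : Tpow R H 0 →ₗ[R] Tpow R H 1)
  | q+1 => ((TensorProduct.mk R (Tpow R H (q+1)) H).flip 1 :
      Tpow R H (q+1) →ₗ[R] Tpow R H (q+2))

/-- The counit `ε^{⊗q} : H^{⊗q} → R`. -/
noncomputable def counitPow : (q : ℕ) → Tpow R H q →ₗ[R] R
  | 0 => LinearMap.id
  | 1 => (Coalgebra.counit (R := R) (A := H) : Tpow R H 1 →ₗ[R] R)
  | q+2 => (LinearMap.mul' R R) ∘ₗ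
      TensorProduct.map (counitPow (q+1)) (Coalgebra.counit (R := R) (A := H))

end Tpow

section Schism

variable (R C H : Type) [CommRing R] [AddCommGroup C] [Module R C] [Coalgebra R C]
  [CommRing H] [HopfAlgebra R H] (δ : C →ₗ[R] C ⊗[R] H)

/-- The leading term `(f ⊗ id) ∘ δ : C → H^{⊗(q+1)}` of the schism differential. -/
noncomputable def schismFirst : (q : ℕ) → (C →ₗ[R] Tpow R H q) → (C →ₗ[R] Tpow R H (q+1))
  | 0, f => (TensorProduct.lid R H).toLinearMap ∘ₗ
      TensorProduct.map f (LinearMap.id : H →ₗ[R] H) ∘ₗ δ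
  | q+1, f => TensorProduct.map f (LinearMap.id : H →ₗ[R] H) ∘ₗ δ

/-- The schism differential
`D(f) = ((f ⊗ id)∘δ) ⋆ (Δ_H^1 ∘ f)^{⋆-1} ⋆ (Δ_H^2 ∘ f) ⋆ ⋯ ⋆ (f ⊗ 1)^{⋆∓1}`,
where `f' ` is the convolution inverse of `f` (so `(T ∘ f)^{⋆-1} = T ∘ f'` for the
algebra-morphism-induced terms `T`). -/
noncomputable def Dschism (q : ℕ) (f f' : C →ₗ[R] Tpow R H q) : C →ₗ[R] Tpow R H (q+1) :=
  convList R C (Tpow R H (q+1))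
    (schismFirst R C H δ q f ::
      ((List.range q).map fun j =>
        deltaSlot R H q (j+1) ∘ₗ (if (j+1) % 2 = 0 then f else f')) ++
      [tensorOne R H q ∘ₗ (if (q+1) % 2 = 0 then f else f')])

end Schism
section MulMap

variable {R : Type} [CommRing R]

/-- A linear map compatible with multiplication, point-free. -/
def IsMulMap {A B : Type} [Ring A] [Algebra R A] [Ring B] [Algebra R B]
    (T : A →ₗ[R] B) : Prop :=
  T ∘ₗ LinearMap.mul' R A = LinearMap.mul' R B ∘ₗ TensorProduct.map T T

lemma IsMulMap.map_mul {A B : Type} [Ring A] [Algebra R A] [Ring B] [Algebra R B]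
    {T : A →ₗ[R] B} (h : IsMulMap T) (x y : A) : T (x * y) = T x * T y := by
  simpa using congrArg (fun F => F (x ⊗ₜ[R] y)) h

lemma IsMulMap.comp {A B D : Type} [Ring A] [Algebra R A] [Ring B] [Algebra R B]
    [Ring D] [Algebra R D] {T : B →ₗ[R] D} {S : A →ₗ[R] B}
    (hT : IsMulMap T) (hS : IsMulMap S) : IsMulMap (T ∘ₗ S) := by
  unfold IsMulMap
  ext x y
  simp [LinearMap.mul'_apply, IsMulMap.map_mul hS, IsMulMap.map_mul hT]

lemma isMulMap_id {A : Type} [Ring A] [Algebra R A] : IsMulMap (LinearMap.id : A →ₗ[R] A) := by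
  unfold IsMulMap; ext x y; simp

lemma isMulMap_map {A₁ A₂ B₁ B₂ : Type} [CommRing A₁] [Algebra R A₁] [CommRing A₂] [Algebra R A₂]
    [CommRing B₁] [Algebra R B₁] [CommRing B₂] [Algebra R B₂]
    {T₁ : A₁ →ₗ[R] B₁} {T₂ : A₂ →ₗ[R] B₂} (h₁ : IsMulMap T₁) (h₂ : IsMulMap T₂) :
    IsMulMap (TensorProduct.map T₁ T₂) := by
  unfold IsMulMap
  ext a b a' b'
  simp only [LinearMap.comp_apply, TensorProduct.map_tmul, LinearMap.mul'_apply,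
    TensorProduct.AlgebraTensorModule.curry_apply, TensorProduct.curry_apply,
    LinearMap.coe_restrictScalars, Algebra.TensorProduct.tmul_mul_tmul]
  rw [IsMulMap.map_mul h₁, IsMulMap.map_mul h₂]

lemma isMulMap_assoc_symm {A B D : Type} [CommRing A] [Algebra R A] [CommRing B] [Algebra R B]
    [CommRing D] [Algebra R D] :
    IsMulMap ((TensorProduct.assoc R A B D).symm.toLinearMap) := by
  unfold IsMulMap
  ext a b d a' b' d'
  simp [Algebra.TensorProduct.tmul_mul_tmul]

lemma isMulMap_lid {A : Type} [CommRing A] [Algebra R A] :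
    IsMulMap ((TensorProduct.lid R A).toLinearMap) := by
  unfold IsMulMap
  ext r a r' a'
  simp [Algebra.TensorProduct.tmul_mul_tmul, smul_mul_smul_comm]

lemma isMulMap_algebraMap {A : Type} [CommRing A] [Algebra R A] :
    IsMulMap (Algebra.linearMap R A) := by
  unfold IsMulMap
  ext r r'
  simp [LinearMap.mul'_apply]

lemma isMulMap_mk_one {A B : Type} [CommRing A] [Algebra R A] [CommRing B] [Algebra R B] :
    IsMulMap ((TensorProduct.mk R A B).flip 1) := by
  unfold IsMulMap
  ext x y
  simp [Algebra.TensorProduct.tmul_mul_tmul]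

lemma isMulMap_comul {H : Type} [CommRing H] [HopfAlgebra R H] :
    IsMulMap (Coalgebra.comul (R := R) (A := H)) := by
  unfold IsMulMap
  ext x y
  simp [LinearMap.mul'_apply]

end MulMap
section ConvLemmas

variable {R C : Type} [CommRing R] [AddCommGroup C] [Module R C] [Coalgebra R C]

lemma conv_comp {A B : Type} [Ring A] [Algebra R A] [Ring B] [Algebra R B]
    {T : A →ₗ[R] B} (hT : IsMulMap T) (f g : C →ₗ[R] A) :
    T ∘ₗ conv R C A f g = conv R C B (T ∘ₗ f) (T ∘ₗ g) := by
  unfold conv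
  rw [TensorProduct.map_comp, ← LinearMap.comp_assoc, ← LinearMap.comp_assoc,
    ← LinearMap.comp_assoc, hT]
  simp only [LinearMap.comp_assoc]

lemma conv_one_left {A : Type} [Ring A] [Algebra R A] (f : C →ₗ[R] A) :
    conv R C A (convOne R C A) f = f := by
  unfold conv _root_.convOne
  have h1 : TensorProduct.map ((Algebra.linearMap R A) ∘ₗ Coalgebra.counit) f
      = TensorProduct.map (Algebra.linearMap R A) f ∘ₗ
        (Coalgebra.counit (R := R) (A := C)).rTensor C := by
    rw [LinearMap.rTensor, ← TensorProduct.map_comp]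
    simp
  rw [h1]
  simp only [LinearMap.comp_assoc]
  rw [Coalgebra.rTensor_counit_comp_comul]
  ext c
  simp [LinearMap.mul'_apply]

lemma conv_one_right {A : Type} [Ring A] [Algebra R A] (f : C →ₗ[R] A) :
    conv R C A f (convOne R C A) = f := by
  unfold conv _root_.convOne
  have h1 : TensorProduct.map f ((Algebra.linearMap R A) ∘ₗ Coalgebra.counit)
      = TensorProduct.map f (Algebra.linearMap R A) ∘ₗ
        (Coalgebra.counit (R := R) (A := C)).lTensor C := by
    rw [LinearMap.lTensor, ← TensorProduct.map_comp]
    simp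
  rw [h1]
  simp only [LinearMap.comp_assoc]
  rw [Coalgebra.lTensor_counit_comp_comul]
  ext c
  simp [LinearMap.mul'_apply]

lemma conv_assoc {A : Type} [Ring A] [Algebra R A] (f g h : C →ₗ[R] A) :
    conv R C A (conv R C A f g) h = conv R C A f (conv R C A g h) := by
  have K : LinearMap.mul' R A ∘ₗ TensorProduct.map (LinearMap.mul' R A) LinearMap.id
      = (LinearMap.mul' R A ∘ₗ TensorProduct.map LinearMap.id (LinearMap.mul' R A)) ∘ₗ
        (TensorProduct.assoc R A A A).toLinearMap := by
    ext a b c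
    simp [LinearMap.mul'_apply, mul_assoc]
  have N : (TensorProduct.assoc R A A A).toLinearMap ∘ₗ
        TensorProduct.map (TensorProduct.map f g) h
      = TensorProduct.map f (TensorProduct.map g h) ∘ₗ
        (TensorProduct.assoc R C C C).toLinearMap := by
    ext x y z
    simp
  unfold conv
  have e1 : TensorProduct.map (LinearMap.mul' R A ∘ₗ
        TensorProduct.map f g ∘ₗ Coalgebra.comul) h
      = TensorProduct.map (LinearMap.mul' R A) LinearMap.id ∘ₗ
        TensorProduct.map (TensorProduct.map f g) h ∘ₗ
        (Coalgebra.comul (R := R) (A := C)).rTensor C := by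
    rw [LinearMap.rTensor, ← TensorProduct.map_comp, ← TensorProduct.map_comp]
    simp
  have e2 : TensorProduct.map f (LinearMap.mul' R A ∘ₗ
        TensorProduct.map g h ∘ₗ Coalgebra.comul)
      = TensorProduct.map LinearMap.id (LinearMap.mul' R A) ∘ₗ
        TensorProduct.map f (TensorProduct.map g h) ∘ₗ
        (Coalgebra.comul (R := R) (A := C)).lTensor C := by
    rw [LinearMap.lTensor, ← TensorProduct.map_comp, ← TensorProduct.map_comp]
    simp
  rw [e1, e2]
  have hQQ : LinearMap.mul' R A ∘ₗ TensorProduct.map (LinearMap.mul' R A) LinearMap.id ∘ₗ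
        TensorProduct.map (TensorProduct.map f g) h
      = (LinearMap.mul' R A ∘ₗ TensorProduct.map LinearMap.id (LinearMap.mul' R A) ∘ₗ
        TensorProduct.map f (TensorProduct.map g h)) ∘ₗ
        (TensorProduct.assoc R C C C).toLinearMap := by
    ext x y z
    simp [LinearMap.mul'_apply, mul_assoc]
  simp only [LinearMap.comp_assoc]
  rw [← Coalgebra.coassoc]
  simp only [← LinearMap.comp_assoc]
  simp only [← LinearMap.comp_assoc] at hQQ
  rw [hQQ]

lemma conv_comm {A : Type} [CommRing A] [Algebra R A]
    (hC : (TensorProduct.comm R C C).toLinearMap ∘ₗ (Coalgebra.comul (R := R))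
      = Coalgebra.comul) (f g : C →ₗ[R] A) :
    conv R C A f g = conv R C A g f := by
  unfold conv
  conv_lhs => rw [← hC]
  have hP : LinearMap.mul' R A ∘ₗ TensorProduct.map f g ∘ₗ
        (TensorProduct.comm R C C).toLinearMap
      = LinearMap.mul' R A ∘ₗ TensorProduct.map g f := by
    ext x y
    simp [LinearMap.mul'_apply, mul_comm]
  simp only [← LinearMap.comp_assoc]
  simp only [← LinearMap.comp_assoc] at hP
  rw [hP]

lemma conv_conv_conv_comm {A : Type} [CommRing A] [Algebra R A]
    (hC : (TensorProduct.comm R C C).toLinearMap ∘ₗ (Coalgebra.comul (R := R))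
      = Coalgebra.comul) (a b c d : C →ₗ[R] A) :
    conv R C A (conv R C A a b) (conv R C A c d)
      = conv R C A (conv R C A a c) (conv R C A b d) := by
  rw [conv_assoc, conv_assoc, ← conv_assoc b c d, conv_comm hC b c, conv_assoc]

lemma convList_zipWith {A : Type} [CommRing A] [Algebra R A]
    (hC : (TensorProduct.comm R C C).toLinearMap ∘ₗ (Coalgebra.comul (R := R))
      = Coalgebra.comul) :
    ∀ (l₁ l₂ : List (C →ₗ[R] A)), l₁.length = l₂.length →
    convList R C A (List.zipWith (conv R C A) l₁ l₂)
      = conv R C A (convList R C A l₁) (convList R C A l₂)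
  | [], [], _ => by simp [convList, conv_one_left]
  | a :: t₁, b :: t₂, h => by
    simp only [List.zipWith_cons_cons, convList, List.foldr_cons]
    have ih := convList_zipWith hC t₁ t₂ (by simpa using h)
    simp only [convList] at ih
    rw [show List.zipWith (conv R C A) t₁ t₂ =
      List.zipWith (conv R C A) t₁ t₂ from rfl, ih, conv_conv_conv_comm hC]
  | [], _ :: _, h => by simp at h
  | _ :: _, [], h => by simp at h

end ConvLemmas
section SchismKey

variable {R C H : Type} [CommRing R] [AddCommGroup C] [Module R C] [Coalgebra R C]
  [CommRing H] [HopfAlgebra R H]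

lemma schism_key {δ : C →ₗ[R] C ⊗[R] H}
    (hδ : (TensorProduct.map (LinearMap.id : (C ⊗[R] C) →ₗ[R] C ⊗[R] C)
        (LinearMap.mul' R H)) ∘ₗ
      (TensorProduct.tensorTensorTensorComm R C H C H).toLinearMap ∘ₗ
      (TensorProduct.map δ δ) ∘ₗ Coalgebra.comul
      = (TensorProduct.map (Coalgebra.comul (R := R)) (LinearMap.id : H →ₗ[R] H)) ∘ₗ δ)
    (A : Type) [CommRing A] [Algebra R A] (f g : C →ₗ[R] A) :
    TensorProduct.map (conv R C A f g) (LinearMap.id : H →ₗ[R] H) ∘ₗ δ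
      = conv R C (A ⊗[R] H) (TensorProduct.map f LinearMap.id ∘ₗ δ)
          (TensorProduct.map g LinearMap.id ∘ₗ δ) := by
  unfold conv
  have K3 : TensorProduct.map (TensorProduct.map f (LinearMap.id : H →ₗ[R] H) ∘ₗ δ)
        (TensorProduct.map g LinearMap.id ∘ₗ δ)
      = TensorProduct.map (TensorProduct.map f LinearMap.id)
          (TensorProduct.map g (LinearMap.id : H →ₗ[R] H)) ∘ₗ TensorProduct.map δ δ := by
    rw [← TensorProduct.map_comp]
  have E : LinearMap.mul' R (A ⊗[R] H) ∘ₗ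
        TensorProduct.map (TensorProduct.map f (LinearMap.id : H →ₗ[R] H))
          (TensorProduct.map g LinearMap.id)
      = TensorProduct.map (LinearMap.mul' R A ∘ₗ TensorProduct.map f g)
          (LinearMap.id : H →ₗ[R] H) ∘ₗ
        TensorProduct.map (LinearMap.id : (C ⊗[R] C) →ₗ[R] C ⊗[R] C) (LinearMap.mul' R H) ∘ₗ
        (TensorProduct.tensorTensorTensorComm R C H C H).toLinearMap := by
    ext x h y k
    simp [LinearMap.mul'_apply, Algebra.TensorProduct.tmul_mul_tmul]
  rw [K3]
  simp only [← LinearMap.comp_assoc]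
  simp only [← LinearMap.comp_assoc] at E
  rw [E]
  simp only [LinearMap.comp_assoc]
  rw [hδ]
  simp only [← LinearMap.comp_assoc]
  rw [← TensorProduct.map_comp]
  simp only [LinearMap.comp_id]

end SchismKey

section StructureMulMaps

variable (R H : Type) [CommRing R] [CommRing H] [HopfAlgebra R H]

lemma deltaSlot_isMulMap : ∀ (q i : ℕ), IsMulMap (R := R) (deltaSlot R H q i)
  | 0, i => by
    unfold IsMulMap deltaSlot
    ext x y
    simp
  | 1, i => by
    show IsMulMap (R := R) (Coalgebra.comul (R := R) (A := H) : Tpow R H 1 →ₗ[R] Tpow R H 2)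
    exact isMulMap_comul
  | (q+2), i => by
    rw [deltaSlot]
    by_cases hi : i = q + 2
    · simp only [hi, ↓reduceIte]; exact IsMulMap.comp isMulMap_assoc_symm (isMulMap_map isMulMap_id isMulMap_comul)
    · simp only [hi, ↓reduceIte]; exact isMulMap_map (deltaSlot_isMulMap (q+1) i) isMulMap_id

lemma tensorOne_isMulMap : ∀ (q : ℕ), IsMulMap (R := R) (tensorOne R H q)
  | 0 => isMulMap_algebraMap
  | (q+1) => isMulMap_mk_one

end StructureMulMaps
section Final

variable {R C H : Type} [CommRing R] [AddCommGroup C] [Module R C] [Coalgebra R C]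
  [CommRing H] [HopfAlgebra R H]

lemma schismFirst_conv {δ : C →ₗ[R] C ⊗[R] H} (hδ : IsCoflatCoaction R C H δ) :
    ∀ (q : ℕ) (f g : C →ₗ[R] Tpow R H q),
    schismFirst R C H δ q (conv R C (Tpow R H q) f g)
      = conv R C (Tpow R H (q+1)) (schismFirst R C H δ q f) (schismFirst R C H δ q g)
  | 0, f, g => by
    simp only [schismFirst]
    exact (congrArg (fun F => (TensorProduct.lid R H).toLinearMap ∘ₗ F)
      (schism_key hδ.coflat_mul (Tpow R H 0) f g)).trans (conv_comp isMulMap_lid _ _)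
  | (q+1), f, g => by
    simp only [schismFirst]
    exact schism_key hδ.coflat_mul (Tpow R H (q+1)) f g

end Final
/-- for a commutative Hopf algebra `H`, a cocommutative coalgebra `C` with
coflat `H`-coaction `δ`, and counitary convolution-invertible `f, g : C → H^{⊗q}`
(with convolution inverses `f', g'`), the schism differential is multiplicative,
`D(f ⋆ g) = D(f) ⋆ D(g)`; in particular `((f ⋆ g) ⊗ id) ∘ δ = ((f ⊗ id)∘δ) ⋆ ((g ⊗ id)∘δ)`. -/
theorem Dschism_conv (R C H : Type) [CommRing R]
    [AddCommGroup C] [Module R C] [Coalgebra R C] [CommRing H] [HopfAlgebra R H]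
    (hC : (TensorProduct.comm R C C).toLinearMap ∘ₗ (Coalgebra.comul (R := R))
      = Coalgebra.comul)
    (δ : C →ₗ[R] C ⊗[R] H) (hδ : IsCoflatCoaction R C H δ)
    (q : ℕ) (f f' g g' : C →ₗ[R] Tpow R H q)
    (hf : conv R C (Tpow R H q) f f' = convOne R C (Tpow R H q))
    (hf' : conv R C (Tpow R H q) f' f = convOne R C (Tpow R H q))
    (hg : conv R C (Tpow R H q) g g' = convOne R C (Tpow R H q))
    (hg' : conv R C (Tpow R H q) g' g = convOne R C (Tpow R H q))
    (hfc : counitPow R H q ∘ₗ f = Coalgebra.counit)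
    (hf'c : counitPow R H q ∘ₗ f' = Coalgebra.counit)
    (hgc : counitPow R H q ∘ₗ g = Coalgebra.counit)
    (hg'c : counitPow R H q ∘ₗ g' = Coalgebra.counit) :
    Dschism R C H δ q (conv R C (Tpow R H q) f g) (conv R C (Tpow R H q) f' g')
      = conv R C (Tpow R H (q+1)) (Dschism R C H δ q f f') (Dschism R C H δ q g g') ∧
    schismFirst R C H δ q (conv R C (Tpow R H q) f g)
      = conv R C (Tpow R H (q+1)) (schismFirst R C H δ q f) (schismFirst R C H δ q g) := by
  refine ⟨?_, schismFirst_conv hδ q f g⟩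
  unfold Dschism
  rw [schismFirst_conv hδ q f g]
  have entry_delta : ∀ j : ℕ,
      deltaSlot R H q (j+1) ∘ₗ (if (j+1) % 2 = 0 then conv R C (Tpow R H q) f g
          else conv R C (Tpow R H q) f' g')
      = conv R C (Tpow R H (q+1))
          (deltaSlot R H q (j+1) ∘ₗ if (j+1) % 2 = 0 then f else f')
          (deltaSlot R H q (j+1) ∘ₗ if (j+1) % 2 = 0 then g else g') := by
    intro j
    split <;> exact conv_comp (deltaSlot_isMulMap R H q (j+1)) _ _
  have entry_one :
      tensorOne R H q ∘ₗ (if (q+1) % 2 = 0 then conv R C (Tpow R H q) f g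
          else conv R C (Tpow R H q) f' g')
      = conv R C (Tpow R H (q+1))
          (tensorOne R H q ∘ₗ if (q+1) % 2 = 0 then f else f')
          (tensorOne R H q ∘ₗ if (q+1) % 2 = 0 then g else g') := by
    split <;> exact conv_comp (tensorOne_isMulMap R H q) _ _
  simp only [entry_delta, entry_one]
  rw [← convList_zipWith hC _ _ (by simp)]
  congr 1
  rw [List.zipWith_append (by simp), List.zipWith_cons_cons,
    List.zipWith_map, List.zipWith_self, List.zipWith_cons_cons, List.zipWith_nil_right]
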